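/- Let A ∈ ℝ^{n×n}, B ∈ ℝ^{n×m}, and suppose U ∈ ℝ^{m×T}, X₀ ∈ ℝ^{n×T} satisfy rank [U; X₀] = n + m (the stacked (m+n) × T matrix has full row rank). Then for every matrix K ∈ ℝ^{m×n} there exists G ∈ ℝ^{T×n} such that U G = K and X₀ G = I_n. -/
import Mathlib


open Matrix

/-- If the stacked data matrix `[U; X₀]` has full row rank `m + n`, then for every
`K` there is `G` with `U G = K` and `X₀ G = 1`. -/
theorem data_parametrization_exists (n m T : ℕ)
    (A : Matrix (Fin n) (Fin n) ℝ) (B : Matrix (Fin n) (Fin m) ℝ)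
    (U : Matrix (Fin m) (Fin T) ℝ) (X₀ : Matrix (Fin n) (Fin T) ℝ)
    (hrank : (Matrix.fromRows U X₀).rank = m + n) :
    ∀ K : Matrix (Fin m) (Fin n) ℝ,
      ∃ G : Matrix (Fin T) (Fin n) ℝ, U * G = K ∧ X₀ * G = 1 := by
  intro K
  set M := Matrix.fromRows U X₀ with hM
  have hsurj : Function.Surjective M.mulVecLin := by
    rw [← LinearMap.range_eq_top]
    apply Submodule.eq_top_of_finrank_eq
    have : M.rank = Module.finrank ℝ (LinearMap.range M.mulVecLin) := rfl
    rw [← this, hrank]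
    simp [Module.finrank_pi]
  choose g hg using hsurj
  have hMG : M * (Matrix.of fun t j =>
      g (fun i => Matrix.fromRows K (1 : Matrix (Fin n) (Fin n) ℝ) i j) t)
      = Matrix.fromRows K 1 := by
    ext i j
    have := congrFun (hg (fun i => Matrix.fromRows K (1 : Matrix (Fin n) (Fin n) ℝ) i j)) i
    simpa [Matrix.mulVecLin, Matrix.mul_apply, Matrix.mulVec, dotProduct] using this
  rw [hM, Matrix.fromRows_mul] at hMG
  refine ⟨Matrix.of fun t j => g (fun i => Matrix.fromRows K (1 : Matrix (Fin n) (Fin n) ℝ) i j) t, ?_, ?_⟩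
  · ext i j; exact congrFun (congrFun hMG (Sum.inl i)) j
  · ext i j; simpa using congrFun (congrFun hMG (Sum.inr i)) j
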